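/- Let F and G be disjoint closed subsets of the Niemytzki plane with G regular closed, let 0 < ε < 1 and α > 0. Then the closure, in the Niemytzki topology, of the union of the basic neighbourhoods K(p, εα) over all p ∈ F_α = {p ∈ F : K(p, α) ∩ G = ∅} is disjoint from G. -/

import Mathlib

open Set Metric

/-- Basic Niemytzki neighbourhood: for a point on the axis, the point together with the
open disc tangent to the axis at that point; for a point above the axis, the open disc
intersected with the closed half-plane. -/
noncomputable def NK (p : ℝ × ℝ) (α : ℝ) : Set (ℝ × ℝ) :=
  if p.2 = 0 then insert p (Metric.ball (p.1, α) α)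
  else Metric.ball p α ∩ {q : ℝ × ℝ | 0 ≤ q.2}

/-- The underlying set of the Niemytzki plane: the closed upper half-plane. -/
abbrev NPoint : Type := {p : ℝ × ℝ // 0 ≤ p.2}

/-- The Niemytzki (tangent disc) topology on the closed upper half-plane. -/
noncomputable def niem : TopologicalSpace NPoint :=
  TopologicalSpace.generateFrom
    {s : Set NPoint | ∃ (q : NPoint) (α : ℝ), 0 < α ∧ s = Subtype.val ⁻¹' NK q.val α}

lemma NK_eq_zero {p : ℝ × ℝ} (hp : p.2 = 0) (γ : ℝ) :
    NK p γ = insert p (Metric.ball (p.1, γ) γ) := by rw [NK, if_pos hp]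

lemma NK_eq_pos {p : ℝ × ℝ} (hp : p.2 ≠ 0) (γ : ℝ) :
    NK p γ = Metric.ball p γ ∩ {q : ℝ × ℝ | 0 ≤ q.2} := by rw [NK, if_neg hp]

lemma mem_pball {w p : ℝ × ℝ} {γ : ℝ} :
    w ∈ Metric.ball p γ ↔ |w.1 - p.1| < γ ∧ |w.2 - p.2| < γ := by
  rw [Metric.mem_ball, Prod.dist_eq, max_lt_iff, Real.dist_eq, Real.dist_eq]

lemma mem_tball {w : ℝ × ℝ} {a γ : ℝ} :
    w ∈ Metric.ball ((a, γ) : ℝ × ℝ) γ ↔ |w.1 - a| < γ ∧ 0 < w.2 ∧ w.2 < 2 * γ := by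
  rw [mem_pball]
  constructor
  · rintro ⟨h1, h2⟩
    rcases abs_lt.1 h2 with ⟨h3, h4⟩
    exact ⟨h1, by linarith, by linarith⟩
  · rintro ⟨h1, h2, h3⟩
    exact ⟨h1, abs_lt.2 ⟨by linarith, by linarith⟩⟩

lemma mem_NK_self {p : ℝ × ℝ} (h0 : 0 ≤ p.2) {γ : ℝ} (hγ : 0 < γ) : p ∈ NK p γ := by
  by_cases hp : p.2 = 0
  · rw [NK_eq_zero hp]; exact mem_insert _ _
  · rw [NK_eq_pos hp]
    exact ⟨Metric.mem_ball_self hγ, h0⟩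

lemma NK_mono {p : ℝ × ℝ} {γ γ' : ℝ} (h : γ ≤ γ') : NK p γ ⊆ NK p γ' := by
  by_cases hp : p.2 = 0
  · rw [NK_eq_zero hp, NK_eq_zero hp]
    rintro w (rfl | hw)
    · exact mem_insert _ _
    · right
      rcases mem_tball.1 hw with ⟨h1, h2, h3⟩
      exact mem_tball.2 ⟨lt_of_lt_of_le h1 h, h2, by linarith⟩
  · rw [NK_eq_pos hp, NK_eq_pos hp]
    exact inter_subset_inter (Metric.ball_subset_ball h) subset_rfl

/-- Key geometric lemma: the basic neighbourhoods form a basis. -/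
lemma NK_basis {z p : ℝ × ℝ} (hz : 0 ≤ z.2) (hp : 0 ≤ p.2) {β : ℝ} (hβ : 0 < β)
    (hm : z ∈ NK p β) :
    ∃ γ, 0 < γ ∧ ∀ w : ℝ × ℝ, 0 ≤ w.2 → w ∈ NK z γ → w ∈ NK p β := by
  by_cases hz0 : z.2 = 0
  · by_cases hp0 : p.2 = 0
    · -- z on axis, p on axis: z = p
      rw [NK_eq_zero hp0] at hm
      rcases hm with rfl | hm
      · exact ⟨β, hβ, fun w _ hw => hw⟩
      · exact absurd (mem_tball.1 hm).2.1 (by rw [hz0]; exact lt_irrefl 0)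
    · -- z on axis, p above axis
      rw [NK_eq_pos hp0] at hm
      refine ⟨(β - dist z p) / 2, by linarith [Metric.mem_ball.1 hm.1], ?_⟩
      intro w hw hwz
      rw [NK_eq_zero hz0] at hwz
      rw [NK_eq_pos hp0]
      rcases hwz with rfl | hwz
      · exact hm
      · refine ⟨Metric.mem_ball.2 ?_, hw⟩
        have hd : dist w z < 2 * ((β - dist z p) / 2) := by
          rcases mem_tball.1 hwz with ⟨h1, h2, h3⟩
          rw [Prod.dist_eq, Real.dist_eq, Real.dist_eq, hz0, max_lt_iff]
          rcases abs_lt.1 h1 with ⟨h1a, h1b⟩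
          constructor
          · rw [abs_lt]; constructor <;> linarith
          · rw [abs_lt]; constructor <;> linarith
        calc dist w p ≤ dist w z + dist z p := dist_triangle _ _ _
          _ < β := by linarith
  · by_cases hp0 : p.2 = 0
    · -- z above axis, p on axis: z in tangent ball of p
      rw [NK_eq_zero hp0] at hm
      rcases hm with rfl | hm
      · exact absurd hp0 hz0
      · refine ⟨β - dist z (p.1, β), by linarith [Metric.mem_ball.1 hm], ?_⟩
        intro w hw hwz
        rw [NK_eq_pos hz0] at hwz
        rw [NK_eq_zero hp0]
        right
        refine Metric.mem_ball.2 ?_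
        calc dist w (p.1, β) ≤ dist w z + dist z (p.1, β) := dist_triangle _ _ _
          _ < β := by linarith [Metric.mem_ball.1 hwz.1]
    · -- both above axis
      rw [NK_eq_pos hp0] at hm
      refine ⟨β - dist z p, by linarith [Metric.mem_ball.1 hm.1], ?_⟩
      intro w hw hwz
      rw [NK_eq_pos hz0] at hwz
      rw [NK_eq_pos hp0]
      refine ⟨Metric.mem_ball.2 ?_, hw⟩
      calc dist w p ≤ dist w z + dist z p := dist_triangle _ _ _
        _ < β := by linarith [Metric.mem_ball.1 hwz.1]

/-- Every Niemytzki-open set contains a basic neighbourhood of each of its points. -/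
lemma nbhd_basis {W : Set NPoint}
    (hW : TopologicalSpace.GenerateOpen
      {s : Set NPoint | ∃ (q : NPoint) (α : ℝ), 0 < α ∧ s = Subtype.val ⁻¹' NK q.val α} W) :
    ∀ q ∈ W, ∃ γ, 0 < γ ∧ Subtype.val ⁻¹' NK q.val γ ⊆ W := by
  induction hW with
  | basic s hs =>
    intro q hq
    obtain ⟨z, β, hβ, rfl⟩ := hs
    obtain ⟨γ, hγ, h⟩ := NK_basis q.2 z.2 hβ hq
    exact ⟨γ, hγ, fun w hw => h w.val w.2 hw⟩
  | univ => exact fun q _ => ⟨1, one_pos, fun _ _ => trivial⟩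
  | inter s t _ _ ihs iht =>
    intro q hq
    obtain ⟨γ1, h1, hs1⟩ := ihs q hq.1
    obtain ⟨γ2, h2, hs2⟩ := iht q hq.2
    exact ⟨min γ1 γ2, lt_min h1 h2,
      fun w hw => ⟨hs1 (NK_mono (min_le_left _ _) hw), hs2 (NK_mono (min_le_right _ _) hw)⟩⟩
  | sUnion S hS ih =>
    intro q hq
    obtain ⟨t, htS, hqt⟩ := hq
    obtain ⟨γ, hγ, h⟩ := ih t htS q hqt
    exact ⟨γ, hγ, fun w hw => ⟨t, htS, h hw⟩⟩

/-- Lemma 3: if `F` and `G` are disjoint closed subsets of the Niemytzki plane with `G`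
regular closed, and `0 < ε < 1`, `0 < α`, then the Niemytzki closure of
`⋃ {K(p, εα) : p ∈ F_α}` is disjoint from `G`. -/
theorem niemytzki_lemma3 (F G : Set NPoint)
    (hF : @IsClosed NPoint niem F) (hGc : @IsClosed NPoint niem G)
    (hG : G = @closure NPoint niem (@interior NPoint niem G))
    (hFG : Disjoint F G) (ε α : ℝ) (hε : 0 < ε) (hε1 : ε < 1) (hα : 0 < α) :
    Disjoint
      (@closure NPoint niem
        (⋃ p ∈ {p ∈ F | (Subtype.val ⁻¹' NK p.val α) ∩ G = ∅},
          Subtype.val ⁻¹' NK (p : NPoint).val (ε * α)))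
      G := by
  letI : TopologicalSpace NPoint := niem
  rw [Set.disjoint_right]
  intro q hqG hqcl
  set β : ℝ := (1 - ε) * α / 8 with hβdef
  have hβ : 0 < β := by rw [hβdef]; nlinarith
  have h8 : 8 * β = α - ε * α := by rw [hβdef]; ring
  have hεα : 0 < ε * α := by positivity
  -- open basic neighbourhoods are open
  have hopen : ∀ (z : NPoint) (γ : ℝ), 0 < γ →
      @IsOpen NPoint niem (Subtype.val ⁻¹' NK z.val γ) := by
    intro z γ hγ
    exact TopologicalSpace.GenerateOpen.basic _ ⟨z, γ, hγ, rfl⟩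
  -- find a witness g ∈ G above the axis, close to q
  obtain ⟨g, hgG, hg2, hg1d, hg2d⟩ :
      ∃ g : NPoint, g ∈ G ∧ 0 < g.val.2 ∧ |g.val.1 - q.val.1| < β ∧
        |g.val.2 - q.val.2| < 2 * β := by
    by_cases hq0 : q.val.2 = 0
    · -- use regular closedness
      have hqcl' : q ∈ @closure NPoint niem (@interior NPoint niem G) := hG ▸ hqG
      have hmem : q ∈ Subtype.val ⁻¹' NK q.val β := mem_NK_self q.2 hβ
      obtain ⟨g', hg'V, hg'int⟩ :=
        mem_closure_iff.1 hqcl' _ (hopen q β hβ) hmem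
      rw [NK_eq_zero hq0] at hg'V
      rcases hg'V with hg'q | hg'b
      · -- g' = q, so q is interior to G; pick a point just above q
        have hg'q' : g' = q := Subtype.ext hg'q
        subst hg'q'
        have hint : TopologicalSpace.GenerateOpen
            {s : Set NPoint | ∃ (z : NPoint) (α : ℝ), 0 < α ∧ s = Subtype.val ⁻¹' NK z.val α}
            (@interior NPoint niem G) := @isOpen_interior NPoint niem G
        obtain ⟨γ, hγ, hsub⟩ := nbhd_basis hint g' hg'int
        set γ' : ℝ := min γ β with hγ'def
        have hγ' : 0 < γ' := lt_min hγ hβ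
        have hmval : ((g'.val.1, γ') : ℝ × ℝ) ∈ NK g'.val γ := by
          apply NK_mono (min_le_left γ β)
          rw [NK_eq_zero hq0]
          right
          exact mem_tball.2 ⟨by simp only [sub_self, abs_zero]; exact hγ', hγ', by linarith⟩
        refine ⟨⟨(g'.val.1, γ'), le_of_lt hγ'⟩, ?_, hγ', ?_, ?_⟩
        · exact (interior_subset : interior G ⊆ G) (hsub hmval)
        · show |g'.val.1 - g'.val.1| < β
          simpa using hβ
        · show |γ' - g'.val.2| < 2 * β
          rw [hq0, sub_zero, abs_of_pos hγ']
          calc γ' ≤ β := min_le_right _ _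
            _ < 2 * β := by linarith
      · -- g' is above the axis
        rcases mem_tball.1 hg'b with ⟨h1, h2, h3⟩
        refine ⟨g', (interior_subset : interior G ⊆ G) hg'int, h2, h1, ?_⟩
        rw [hq0, sub_zero, abs_of_pos h2]
        exact h3
    · -- q itself is above the axis: take g = q
      refine ⟨q, hqG, lt_of_le_of_ne q.2 (Ne.symm hq0), by simp [hβ], by simp; linarith⟩
  -- from q ∈ closure U, extract a point of U close to q
  have hmem : q ∈ Subtype.val ⁻¹' NK q.val β := mem_NK_self q.2 hβ
  obtain ⟨w, hwV, hwU⟩ :=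
    mem_closure_iff.1 hqcl _ (hopen q β hβ) hmem
  simp only [mem_iUnion, exists_prop, mem_setOf_eq] at hwU
  obtain ⟨p, ⟨hpF, hpG⟩, hwp⟩ := hwU
  -- coordinates of x := w.val relative to q
  have hE1 : |w.val.1 - q.val.1| < β ∧ |w.val.2 - q.val.2| < 2 * β := by
    by_cases hq0 : q.val.2 = 0
    · rw [mem_preimage, NK_eq_zero hq0] at hwV
      rcases hwV with hwq | hwb
      · rw [hwq]
        refine ⟨by simpa using hβ, by simpa using (by linarith : (0:ℝ) < 2 * β)⟩
      · rcases mem_tball.1 hwb with ⟨h1, h2, h3⟩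
        refine ⟨h1, ?_⟩
        rw [hq0, sub_zero, abs_of_pos h2]; exact h3
    · rw [mem_preimage, NK_eq_pos hq0] at hwV
      rcases mem_pball.1 hwV.1 with ⟨h1, h2⟩
      exact ⟨h1, by linarith [abs_lt.1 h2]⟩
  obtain ⟨hx1, hx2⟩ := hE1
  -- show g ∈ K(p, α), contradicting hpG
  have hgK : g ∈ (Subtype.val ⁻¹' NK p.val α) ∩ G := by
    refine ⟨?_, hgG⟩
    rw [mem_preimage]
    rcases abs_lt.1 hg1d with ⟨hg1a, hg1b⟩
    rcases abs_lt.1 hg2d with ⟨hg2a, hg2b⟩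
    rcases abs_lt.1 hx1 with ⟨hx1a, hx1b⟩
    rcases abs_lt.1 hx2 with ⟨hx2a, hx2b⟩
    by_cases hp0 : p.val.2 = 0
    · -- p on the axis
      rw [mem_preimage, NK_eq_zero hp0] at hwp
      have hxp : |w.val.1 - p.val.1| < ε * α ∧ w.val.2 < 2 * (ε * α) := by
        rcases hwp with hwq | hwb
        · rw [hwq]
          refine ⟨by simpa using hεα, ?_⟩
          rw [hp0]; linarith
        · rcases mem_tball.1 hwb with ⟨h1, h2, h3⟩
          exact ⟨h1, h3⟩
      rcases abs_lt.1 hxp.1 with ⟨hxpa, hxpb⟩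
      have hwnn : 0 ≤ w.val.2 := w.2
      rw [NK_eq_zero hp0]
      right
      refine mem_tball.2 ⟨?_, hg2, ?_⟩
      · rw [abs_lt]; constructor <;> linarith
      · linarith
    · -- p above the axis
      rw [mem_preimage, NK_eq_pos hp0] at hwp
      rcases mem_pball.1 hwp.1 with ⟨h1, h2⟩
      rcases abs_lt.1 h1 with ⟨h1a, h1b⟩
      rcases abs_lt.1 h2 with ⟨h2a, h2b⟩
      rw [NK_eq_pos hp0]
      refine ⟨mem_pball.2 ⟨?_, ?_⟩, le_of_lt hg2⟩
      · rw [abs_lt]; constructor <;> linarith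
      · rw [abs_lt]; constructor <;> linarith
  rw [hpG] at hgK
  exact hgK
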